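/- arXiv:2511.03872 — 2 statements merged into one kernel-verified Lean document; each statement's English description precedes it below -/
import Mathlib

section
/- For all a, z ∈ 𝔻 \ {0} with a ≠ z, the series ∑_{k=-∞}^{∞} log |((log z + 2πik) + \overline{log a}) / ((log z + 2πik) - log a)| converges absolutely and equals log |(1 - \bar{a} z)/(a - z)|, where log denotes any fixed branch of the complex logarithm (the sum is independent of the chosen branches). -/
open Complex Metric Set Filter Topology

private lemma abs_log_le {t : ℝ} (ht : 0 < t) : |Real.log t| ≤ |t - 1| + |t⁻¹ - 1| := by
  rcases le_or_gt 1 t with h | h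
  · have h1 : Real.log t ≤ t - 1 := Real.log_le_sub_one_of_pos ht
    rw [_root_.abs_of_nonneg (Real.log_nonneg h), _root_.abs_of_nonneg (by linarith : (0:ℝ) ≤ t - 1)]
    have h2 : (0:ℝ) ≤ |t⁻¹ - 1| := abs_nonneg _
    linarith
  · have ht1 : (1:ℝ) ≤ t⁻¹ := one_le_inv_iff₀.mpr ⟨ht, h.le⟩
    have h1 : Real.log t⁻¹ ≤ t⁻¹ - 1 := Real.log_le_sub_one_of_pos (inv_pos.mpr ht)
    rw [Real.log_inv] at h1
    rw [abs_of_nonpos (Real.log_nonpos ht.le h.le),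
      _root_.abs_of_nonneg (by linarith : (0:ℝ) ≤ t⁻¹ - 1)]
    have h2 : (0:ℝ) ≤ |t - 1| := abs_nonneg _
    linarith

private lemma pair_lemma (X Y t : ℂ) :
    (X + t*Complex.I)/(Y + t*Complex.I) * ((X - t*Complex.I)/(Y - t*Complex.I))
      = (X^2 + t^2)/(Y^2 + t^2) := by
  rw [div_mul_div_comm]
  have e1 : (X + t*Complex.I) * (X - t*Complex.I) = X^2 + t^2 := by
    linear_combination (-(t^2)) * Complex.I_sq
  have e2 : (Y + t*Complex.I) * (Y - t*Complex.I) = Y^2 + t^2 := by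
    linear_combination (-(t^2)) * Complex.I_sq
  rw [e1, e2]

private lemma prod_Icc_eq (G : ℤ → ℂ) (n : ℕ) :
    ∏ k ∈ Finset.Icc (-(n:ℤ)) (n:ℤ), G k
      = G 0 * ∏ j ∈ Finset.range n, (G ((j:ℤ)+1) * G (-((j:ℤ)+1))) := by
  induction n with
  | zero => simp
  | succ n ih =>
    have hset : Finset.Icc (-((n+1:ℕ):ℤ)) ((n+1:ℕ):ℤ)
        = insert (-((n:ℤ)+1)) (insert ((n:ℤ)+1) (Finset.Icc (-(n:ℤ)) (n:ℤ))) := by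
      ext k
      simp only [Finset.mem_Icc, Finset.mem_insert]
      omega
    rw [hset, Finset.prod_insert, Finset.prod_insert, ih, Finset.prod_range_succ]
    · ring
    · simp only [Finset.mem_Icc]
      omega
    · simp only [Finset.mem_insert, Finset.mem_Icc]
      omega

set_option maxHeartbeats 1000000 in
/-- for `a, z` in the punctured unit disk with `a ≠ z`, and any
choices `la, lz` of logarithms of `a` and `z`, the bilateral series
`∑_{k∈ℤ} log |((log z + 2πik) + conj (log a)) / ((log z + 2πik) - log a)|`
converges absolutely and equals `log |(1 - \bar a z)/(a - z)|`. -/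
theorem green_series_disk
    (a z : ℂ) (ha : a ∈ ball (0:ℂ) 1) (ha0 : a ≠ 0)
    (hz : z ∈ ball (0:ℂ) 1) (hz0 : z ≠ 0) (hne : a ≠ z)
    (la lz : ℂ) (hla : Complex.exp la = a) (hlz : Complex.exp lz = z) :
    Summable (fun k : ℤ =>
      |Real.log ‖((lz + 2*Real.pi*(k:ℂ)*Complex.I) + (starRingEnd ℂ) la) /
        ((lz + 2*Real.pi*(k:ℂ)*Complex.I) - la)‖|) ∧
    ∑' k : ℤ,
      Real.log ‖((lz + 2*Real.pi*(k:ℂ)*Complex.I) + (starRingEnd ℂ) la) /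
        ((lz + 2*Real.pi*(k:ℂ)*Complex.I) - la)‖
      = Real.log ‖(1 - (starRingEnd ℂ) a * z) / (a - z)‖ := by
  have hπ : (0:ℝ) < Real.pi := Real.pi_pos
  have hπc : ((Real.pi:ℂ)) ≠ 0 := by exact_mod_cast Real.pi_ne_zero
  have h2πc : (2*(Real.pi:ℂ)) ≠ 0 := by
    simp [hπc]
  have hanorm : ‖a‖ < 1 := by simpa [mem_ball, dist_eq_norm] using ha
  have hznorm : ‖z‖ < 1 := by simpa [mem_ball, dist_eq_norm] using hz
  set F : ℤ → ℂ := fun k =>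
    ((lz + 2*Real.pi*(k:ℂ)*Complex.I) + (starRingEnd ℂ) la) /
      ((lz + 2*Real.pi*(k:ℂ)*Complex.I) - la) with hFdef
  set f : ℤ → ℝ := fun k => Real.log ‖F k‖ with hfdef
  -- exp of W k is z
  have hWz : ∀ k : ℤ, Complex.exp (lz + 2*Real.pi*(k:ℂ)*Complex.I) = z := by
    intro k
    rw [Complex.exp_add, hlz,
      show (2*(Real.pi:ℂ)*(k:ℂ)*Complex.I) = (k:ℂ) * (2*Real.pi*Complex.I) by ring,
      Complex.exp_int_mul_two_pi_mul_I, mul_one]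
  have hconj : Complex.exp ((starRingEnd ℂ) la) = (starRingEnd ℂ) a := by
    rw [Complex.exp_conj, hla]
  have hza1 : z * (starRingEnd ℂ) a ≠ 1 := by
    intro h
    have : ‖z * (starRingEnd ℂ) a‖ = 1 := by rw [h]; simp
    rw [norm_mul, RCLike.norm_conj] at this
    nlinarith [norm_nonneg z, norm_nonneg a]
  -- denominators nonzero
  have hWc : ∀ k : ℤ, (lz + 2*Real.pi*(k:ℂ)*Complex.I) - la ≠ 0 := by
    intro k h
    rw [sub_eq_zero] at h
    exact hne (by rw [← hla, ← h, hWz])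
  have hWb : ∀ k : ℤ, (lz + 2*Real.pi*(k:ℂ)*Complex.I) + (starRingEnd ℂ) la ≠ 0 := by
    intro k h
    apply hza1
    have : Complex.exp ((lz + 2*Real.pi*(k:ℂ)*Complex.I) + (starRingEnd ℂ) la) = 1 := by
      rw [h, Complex.exp_zero]
    rwa [Complex.exp_add, hWz, hconj] at this
  have hF0 : ∀ k : ℤ, F k ≠ 0 := fun k => div_ne_zero (hWb k) (hWc k)
  -- zb, zc
  set zb : ℂ := (lz + (starRingEnd ℂ) la) * Complex.I / (2*Real.pi) with hzbdef
  set zc : ℂ := (lz - la) * Complex.I / (2*Real.pi) with hzcdef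
  have hexpb : Complex.exp (lz + (starRingEnd ℂ) la) = z * (starRingEnd ℂ) a := by
    rw [Complex.exp_add, hlz, hconj]
  have hexpc : Complex.exp (lz - la) = z / a := by
    rw [Complex.exp_sub, hlz, hla]
  have hzbi : ∀ m : ℤ, zb ≠ (m:ℂ) := by
    intro m h
    apply hza1
    have h2 : lz + (starRingEnd ℂ) la = (-m:ℤ) * (2*Real.pi*Complex.I) := by
      have h3 : (lz + (starRingEnd ℂ) la) * Complex.I = (m:ℂ) * (2*Real.pi) := by
        rw [hzbdef] at h
        field_simp at h
        linear_combination h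
      push_cast
      linear_combination (-Complex.I) * h3 + (lz + (starRingEnd ℂ) la) * Complex.I_sq
    rw [← hexpb, h2, Complex.exp_int_mul_two_pi_mul_I]
  have hzci : ∀ m : ℤ, zc ≠ (m:ℂ) := by
    intro m h
    apply hne
    have h2 : lz - la = (-m:ℤ) * (2*Real.pi*Complex.I) := by
      have h3 : (lz - la) * Complex.I = (m:ℂ) * (2*Real.pi) := by
        rw [hzcdef] at h
        field_simp at h
        linear_combination h
      push_cast
      linear_combination (-Complex.I) * h3 + (lz - la) * Complex.I_sq
    have : z / a = 1 := by rw [← hexpc, h2, Complex.exp_int_mul_two_pi_mul_I]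
    field_simp at this
    exact this.symm
  have hsinb : Complex.sin ((Real.pi:ℂ) * zb) ≠ 0 := by
    intro h
    rw [Complex.sin_eq_zero_iff] at h
    obtain ⟨m, hm⟩ := h
    exact hzbi m (mul_left_cancel₀ hπc (by rw [hm]; ring))
  have hsinc : Complex.sin ((Real.pi:ℂ) * zc) ≠ 0 := by
    intro h
    rw [Complex.sin_eq_zero_iff] at h
    obtain ⟨m, hm⟩ := h
    exact hzci m (mul_left_cancel₀ hπc (by rw [hm]; ring))
  -- nonvanishing of Euler factors
  have hfac : ∀ (u : ℂ), (∀ m : ℤ, u ≠ (m:ℂ)) → ∀ j : ℕ, (1:ℂ) - u^2/((j:ℂ)+1)^2 ≠ 0 := by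
    intro u hu j h
    have hj : ((j:ℂ)+1) ≠ 0 := by intro hcontr; exact_mod_cast hcontr
    have h2 : (u - ((j:ℂ)+1)) * (u + ((j:ℂ)+1)) = 0 := by
      have h3 : u^2 = ((j:ℂ)+1)^2 := by
        field_simp at h
        linear_combination -h
      linear_combination h3
    rcases mul_eq_zero.mp h2 with h4 | h4
    · exact hu ((j:ℤ)+1) (by rw [sub_eq_zero] at h4; rw [h4]; push_cast; ring)
    · exact hu (-((j:ℤ)+1)) (by rw [add_eq_zero_iff_eq_neg] at h4; rw [h4]; push_cast; ring)
  have hfacb := hfac zb hzbi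
  have hfacc := hfac zc hzci
  -- squares of zb, zc
  have hzb_sq : zb^2 = -((lz + (starRingEnd ℂ) la)^2)/(2*(Real.pi:ℂ))^2 := by
    rw [hzbdef, div_pow, mul_pow, Complex.I_sq]; ring
  have hzc_sq : zc^2 = -((lz - la)^2)/(2*(Real.pi:ℂ))^2 := by
    rw [hzcdef, div_pow, mul_pow, Complex.I_sq]; ring
  -- rewriting Euler factors
  have hfacb' : ∀ j : ℕ, (1:ℂ) - zb^2/((j:ℂ)+1)^2
      = ((lz + (starRingEnd ℂ) la)^2 + (2*(Real.pi:ℂ)*((j:ℂ)+1))^2)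
        / (2*(Real.pi:ℂ)*((j:ℂ)+1))^2 := by
    intro j
    have hj : ((j:ℂ)+1) ≠ 0 := by intro hcontr; exact_mod_cast hcontr
    rw [hzb_sq]
    field_simp
    ring
  have hfacc' : ∀ j : ℕ, (1:ℂ) - zc^2/((j:ℂ)+1)^2
      = ((lz - la)^2 + (2*(Real.pi:ℂ)*((j:ℂ)+1))^2)
        / (2*(Real.pi:ℂ)*((j:ℂ)+1))^2 := by
    intro j
    have hj : ((j:ℂ)+1) ≠ 0 := by intro hcontr; exact_mod_cast hcontr
    rw [hzc_sq]
    field_simp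
    ring
  -- the pair identity
  have hpair : ∀ j : ℕ, F ((j:ℤ)+1) * F (-((j:ℤ)+1))
      = (1 - zb^2/((j:ℂ)+1)^2) / (1 - zc^2/((j:ℂ)+1)^2) := by
    intro j
    have hj : ((j:ℂ)+1) ≠ 0 := by intro hcontr; exact_mod_cast hcontr
    have ht : (2*(Real.pi:ℂ)*((j:ℂ)+1)) ≠ 0 := mul_ne_zero h2πc hj
    have e1 : lz + 2*Real.pi*(((j:ℤ)+1:ℤ):ℂ)*Complex.I + (starRingEnd ℂ) la
        = (lz + (starRingEnd ℂ) la) + (2*(Real.pi:ℂ)*((j:ℂ)+1))*Complex.I := by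
      push_cast; ring
    have e2 : lz + 2*Real.pi*(((j:ℤ)+1:ℤ):ℂ)*Complex.I - la
        = (lz - la) + (2*(Real.pi:ℂ)*((j:ℂ)+1))*Complex.I := by
      push_cast; ring
    have e3 : lz + 2*Real.pi*((-((j:ℤ)+1):ℤ):ℂ)*Complex.I + (starRingEnd ℂ) la
        = (lz + (starRingEnd ℂ) la) - (2*(Real.pi:ℂ)*((j:ℂ)+1))*Complex.I := by
      push_cast; ring
    have e4 : lz + 2*Real.pi*((-((j:ℤ)+1):ℤ):ℂ)*Complex.I - la
        = (lz - la) - (2*(Real.pi:ℂ)*((j:ℂ)+1))*Complex.I := by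
      push_cast; ring
    rw [hFdef]
    simp only []
    rw [e1, e2, e3, e4, pair_lemma, hfacb' j, hfacc' j,
      div_div_div_comm, div_self (pow_ne_zero 2 ht), div_one]
  -- partial products over Icc
  have hprodIcc : ∀ n : ℕ, ∏ k ∈ Finset.Icc (-(n:ℤ)) (n:ℤ), F k
      = F 0 * ((∏ j ∈ Finset.range n, (1 - zb^2/((j:ℂ)+1)^2))
          / (∏ j ∈ Finset.range n, (1 - zc^2/((j:ℂ)+1)^2))) := by
    intro n
    rw [prod_Icc_eq F n, Finset.prod_congr rfl (fun j _ => hpair j),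
      ← Finset.prod_div_distrib]
  -- F 0 in terms of zb zc
  have hF0eq : F 0 = ((Real.pi:ℂ) * zb) / ((Real.pi:ℂ) * zc) := by
    rw [hFdef]
    simp only []
    rw [hzbdef, hzcdef]
    have h0 : lz - la ≠ 0 := by have := hWc 0; simpa using this
    have hI := Complex.I_ne_zero
    push_cast
    rw [mul_zero, zero_mul, add_zero]
    field_simp
  -- the limit T of the partial products
  set T : ℂ := Complex.sin ((Real.pi:ℂ)*zb) / Complex.sin ((Real.pi:ℂ)*zc) with hTdef
  have hTne : T ≠ 0 := div_ne_zero hsinb hsinc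
  have hQ : Tendsto (fun n : ℕ => ∏ k ∈ Finset.Icc (-(n:ℤ)) (n:ℤ), F k) atTop (𝓝 T) := by
    have hdiv : Tendsto (fun n : ℕ =>
        ((Real.pi:ℂ)*zb*∏ j ∈ Finset.range n, (1 - zb^2/((j:ℂ)+1)^2))
        / ((Real.pi:ℂ)*zc*∏ j ∈ Finset.range n, (1 - zc^2/((j:ℂ)+1)^2))) atTop (𝓝 T) :=
      (Complex.tendsto_euler_sin_prod zb).div (Complex.tendsto_euler_sin_prod zc) hsinc
    refine hdiv.congr fun n => ?_
    rw [hprodIcc n, hF0eq, div_mul_div_comm]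
  -- partial sums as logs of partial products
  have hlogprod : ∀ n : ℕ, ∑ k ∈ Finset.Icc (-(n:ℤ)) (n:ℤ), f k
      = Real.log ‖∏ k ∈ Finset.Icc (-(n:ℤ)) (n:ℤ), F k‖ := by
    intro n
    rw [norm_prod, Real.log_prod (fun k _ => norm_ne_zero_iff.mpr (hF0 k))]
  have hTend1 : Tendsto (fun n : ℕ => ∑ k ∈ Finset.Icc (-(n:ℤ)) (n:ℤ), f k) atTop
      (𝓝 (Real.log ‖T‖)) := by
    have hcont : ContinuousAt (fun x : ℂ => Real.log ‖x‖) T :=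
      (Real.continuousAt_log (norm_ne_zero_iff.mpr hTne)).comp continuous_norm.continuousAt
    exact (hcont.tendsto.comp hQ).congr fun n => (hlogprod n).symm
  -- summability
  set X1 : ℝ := lz.re - la.re with hX1def
  set R2 : ℝ := lz.re + la.re with hR2def
  set Y0 : ℝ := lz.im - la.im with hY0def
  set D0 : ℝ := R2^2 - X1^2 with hD0def
  set C : ℝ := |D0| / Real.pi^2 with hCdef
  have hNsq : ∀ k : ℤ, Complex.normSq ((lz + 2*Real.pi*(k:ℂ)*Complex.I) + (starRingEnd ℂ) la)
      = R2^2 + (Y0 + 2*Real.pi*(k:ℝ))^2 := by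
    intro k
    rw [Complex.normSq_apply, hR2def, hY0def]
    simp [Complex.add_re, Complex.add_im, Complex.mul_re, Complex.mul_im]
    ring
  have hDsq : ∀ k : ℤ, Complex.normSq ((lz + 2*Real.pi*(k:ℂ)*Complex.I) - la)
      = X1^2 + (Y0 + 2*Real.pi*(k:ℝ))^2 := by
    intro k
    rw [Complex.normSq_apply, hX1def, hY0def]
    simp [Complex.add_re, Complex.add_im, Complex.sub_re, Complex.sub_im,
      Complex.mul_re, Complex.mul_im]
    ring
  have hbound : ∀ k : ℤ, |Y0| + 1 ≤ Real.pi * |(k:ℝ)| → |f k| ≤ C * (1/(k:ℝ)^2) := by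
    intro k hk
    have hkne : (k:ℝ) ≠ 0 := by
      intro h
      rw [h] at hk
      simp at hk
      have := abs_nonneg Y0
      linarith
    have hk2 : (0:ℝ) < Real.pi^2 * (k:ℝ)^2 := by positivity
    have hY : Real.pi * |(k:ℝ)| ≤ |Y0 + 2*Real.pi*(k:ℝ)| := by
      have h2 : |2*Real.pi*(k:ℝ)| - |Y0| ≤ |Y0 + 2*Real.pi*(k:ℝ)| := by
        have h3 := abs_sub_abs_le_abs_sub (2*Real.pi*(k:ℝ)) (-Y0)
        simpa [sub_neg_eq_add, add_comm] using h3
      have h4 : |2*Real.pi*(k:ℝ)| = 2*Real.pi*|(k:ℝ)| := by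
        rw [abs_mul, _root_.abs_of_nonneg (by positivity : (0:ℝ) ≤ 2*Real.pi)]
      linarith
    have hYsq : Real.pi^2 * (k:ℝ)^2 ≤ (Y0 + 2*Real.pi*(k:ℝ))^2 := by
      have h5 := mul_self_le_mul_self (by positivity) hY
      calc Real.pi^2 * (k:ℝ)^2 = (Real.pi * |(k:ℝ)|) * (Real.pi * |(k:ℝ)|) := by
            rw [show (Real.pi * |(k:ℝ)|) * (Real.pi * |(k:ℝ)|)
              = Real.pi^2 * |(k:ℝ)|^2 by ring, _root_.sq_abs]
        _ ≤ |Y0 + 2*Real.pi*(k:ℝ)| * |Y0 + 2*Real.pi*(k:ℝ)| := h5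
        _ = (Y0 + 2*Real.pi*(k:ℝ))^2 := by rw [abs_mul_abs_self]; ring
    have hFpos : 0 < ‖F k‖ := norm_pos_iff.mpr (hF0 k)
    have hu : ‖F k‖^2
        = Complex.normSq ((lz + 2*Real.pi*(k:ℂ)*Complex.I) + (starRingEnd ℂ) la)
          / Complex.normSq ((lz + 2*Real.pi*(k:ℂ)*Complex.I) - la) := by
      rw [hFdef]
      simp only []
      rw [norm_div, div_pow,
        Complex.sq_norm, Complex.sq_norm]
    have hflog : |f k| = |Real.log (‖F k‖^2)| / 2 := by
      rw [hfdef]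
      simp only []
      rw [Real.log_pow]
      push_cast
      rw [abs_mul, _root_.abs_two]
      ring
    rw [hu, hNsq k, hDsq k] at hflog
    have hXpos : (0:ℝ) < X1^2 + (Y0 + 2*Real.pi*(k:ℝ))^2 := by
      nlinarith [sq_nonneg X1]
    have hRpos : (0:ℝ) < R2^2 + (Y0 + 2*Real.pi*(k:ℝ))^2 := by
      nlinarith [sq_nonneg R2]
    have hupos : (0:ℝ) < (R2^2 + (Y0 + 2*Real.pi*(k:ℝ))^2)/(X1^2 + (Y0 + 2*Real.pi*(k:ℝ))^2) :=
      div_pos hRpos hXpos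
    have hlb := abs_log_le hupos
    have h6 : (R2^2 + (Y0 + 2*Real.pi*(k:ℝ))^2)/(X1^2 + (Y0 + 2*Real.pi*(k:ℝ))^2) - 1
        = D0/(X1^2 + (Y0 + 2*Real.pi*(k:ℝ))^2) := by
      rw [div_sub_one (ne_of_gt hXpos), hD0def]
      congr 1
      ring
    have h7 : ((R2^2 + (Y0 + 2*Real.pi*(k:ℝ))^2)/(X1^2 + (Y0 + 2*Real.pi*(k:ℝ))^2))⁻¹ - 1
        = -D0/(R2^2 + (Y0 + 2*Real.pi*(k:ℝ))^2) := by
      rw [inv_div, div_sub_one (ne_of_gt hRpos), hD0def]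
      congr 1
      ring
    rw [h6, h7] at hlb
    rw [abs_div, abs_div, _root_.abs_of_pos hXpos, _root_.abs_of_pos hRpos, abs_neg] at hlb
    have h8 : |D0|/(X1^2 + (Y0 + 2*Real.pi*(k:ℝ))^2) ≤ |D0|/(Real.pi^2*(k:ℝ)^2) :=
      div_le_div_of_nonneg_left (abs_nonneg D0) hk2 (by nlinarith [sq_nonneg X1])
    have h9 : |D0|/(R2^2 + (Y0 + 2*Real.pi*(k:ℝ))^2) ≤ |D0|/(Real.pi^2*(k:ℝ)^2) :=
      div_le_div_of_nonneg_left (abs_nonneg D0) hk2 (by nlinarith [sq_nonneg R2])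
    have hCeq : C * (1/(k:ℝ)^2) = |D0|/(Real.pi^2*(k:ℝ)^2) := by
      rw [hCdef]
      field_simp
    rw [hflog]
    rw [hCeq]
    linarith
  obtain ⟨K, hK⟩ := exists_nat_ge ((|Y0|+1)/Real.pi)
  have habs : Summable (fun k : ℤ => |f k|) := by
    apply Summable.of_norm_bounded_eventually (g := fun k : ℤ => C * (1/(k:ℝ)^2))
      ((Real.summable_one_div_int_pow.mpr (by norm_num)).mul_left C)
    rw [Filter.eventually_cofinite]
    apply Set.Finite.subset (Set.finite_Icc (-(K:ℤ)) (K:ℤ))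
    intro k hk
    simp only [Set.mem_setOf_eq, Real.norm_eq_abs, _root_.abs_abs] at hk
    by_contra hmem
    apply hk
    apply hbound
    have hKk : (K:ℤ) < |k| := by
      simp only [Set.mem_Icc, not_and_or, not_le] at hmem
      rcases hmem with h | h
      · rw [_root_.abs_of_nonpos (by omega)]
        omega
      · rw [_root_.abs_of_nonneg (by omega)]
        omega
    have hKk' : (K:ℝ) < |(k:ℝ)| := by
      rw [← Int.cast_abs]
      exact_mod_cast hKk
    have hK2 : |Y0| + 1 ≤ Real.pi * K := by
      have := (div_le_iff₀ hπ).mp hK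
      linarith
    nlinarith
  have hsumf : Summable f := habs.of_abs
  have hmono : Monotone (fun n : ℕ => Finset.Icc (-(n:ℤ)) (n:ℤ)) := by
    intro m n h
    apply Finset.Icc_subset_Icc
    · exact neg_le_neg (by exact_mod_cast h)
    · exact_mod_cast h
  have hexh : Tendsto (fun n : ℕ => Finset.Icc (-(n:ℤ)) (n:ℤ)) atTop atTop :=
    tendsto_atTop_finset_of_monotone hmono
      (fun k => ⟨k.natAbs, by simp only [Finset.mem_Icc]; omega⟩)
  have hTend2 : Tendsto (fun n : ℕ => ∑ k ∈ Finset.Icc (-(n:ℤ)) (n:ℤ), f k) atTop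
      (𝓝 (∑' k, f k)) := hsumf.hasSum.comp hexh
  have hval : ∑' k, f k = Real.log ‖T‖ := tendsto_nhds_unique hTend2 hTend1
  -- computation of the norm of T
  set E1 : ℂ := Complex.exp ((lz + (starRingEnd ℂ) la)/2) with hE1def
  set E2 : ℂ := Complex.exp ((lz - la)/2) with hE2def
  have hE1ne : E1 ≠ 0 := Complex.exp_ne_zero _
  have hE2ne : E2 ≠ 0 := Complex.exp_ne_zero _
  have hE1sq : E1^2 = z * (starRingEnd ℂ) a := by
    rw [hE1def, sq, ← Complex.exp_add,
      show (lz + (starRingEnd ℂ) la)/2 + (lz + (starRingEnd ℂ) la)/2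
        = lz + (starRingEnd ℂ) la by ring, hexpb]
  have hE2sq : E2^2 = z/a := by
    rw [hE2def, sq, ← Complex.exp_add,
      show (lz - la)/2 + (lz - la)/2 = lz - la by ring, hexpc]
  have hsin1 : Complex.sin ((Real.pi:ℂ)*zb)
      = Complex.sinh ((lz + (starRingEnd ℂ) la)/2) * Complex.I := by
    rw [show (Real.pi:ℂ)*zb = ((lz + (starRingEnd ℂ) la)/2) * Complex.I by
      rw [hzbdef]; field_simp, Complex.sin_mul_I]
  have hsin2 : Complex.sin ((Real.pi:ℂ)*zc) = Complex.sinh ((lz - la)/2) * Complex.I := by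
    rw [show (Real.pi:ℂ)*zc = ((lz - la)/2) * Complex.I by
      rw [hzcdef]; field_simp, Complex.sin_mul_I]
  have hsh1 : Complex.sinh ((lz + (starRingEnd ℂ) la)/2) = (E1 - E1⁻¹)/2 := by
    rw [show Complex.sinh ((lz + (starRingEnd ℂ) la)/2)
      = (Complex.exp ((lz + (starRingEnd ℂ) la)/2)
          - Complex.exp (-((lz + (starRingEnd ℂ) la)/2)))/2 from rfl, Complex.exp_neg, hE1def]
  have hsh2 : Complex.sinh ((lz - la)/2) = (E2 - E2⁻¹)/2 := by
    rw [show Complex.sinh ((lz - la)/2)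
      = (Complex.exp ((lz - la)/2) - Complex.exp (-((lz - la)/2)))/2 from rfl,
      Complex.exp_neg, hE2def]
  have hzane : z/a - 1 ≠ 0 := by
    intro h
    rw [sub_eq_zero] at h
    exact hne ((div_eq_one_iff_eq ha0).mp h).symm
  have hE2sub : E2 - E2⁻¹ ≠ 0 := by
    intro h
    apply hzane
    rw [sub_eq_zero] at h
    have h2 : E2 * E2 = E2⁻¹ * E2 := by rw [← h]
    rw [inv_mul_cancel₀ hE2ne] at h2
    rw [← hE2sq, sq, h2, sub_self]
  have hq1 : E1 - E1⁻¹ = (z * (starRingEnd ℂ) a - 1)/E1 := by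
    rw [← hE1sq]
    field_simp
  have hq2 : E2 - E2⁻¹ = (z/a - 1)/E2 := by
    rw [← hE2sq]
    field_simp
  have hT3 : T = ((z * (starRingEnd ℂ) a - 1) * E2) / ((z/a - 1) * E1) := by
    rw [hTdef, hsin1, hsin2, mul_div_mul_right _ _ Complex.I_ne_zero, hsh1, hsh2,
      div_div_div_comm, div_self (two_ne_zero), div_one, hq1, hq2, div_div_div_comm,
      div_div_eq_mul_div, div_mul_eq_mul_div, mul_comm ((z * (starRingEnd ℂ) a - 1)) E2]
    rw [div_div]
  have hE21 : E2 / E1 = Complex.exp (-((la.re:ℝ):ℂ)) := by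
    rw [hE1def, hE2def, ← Complex.exp_sub]
    congr 1
    have hconj2 := Complex.add_conj la
    push_cast at hconj2 ⊢
    linear_combination (-1/2) * hconj2
  have hnA : ‖a‖ = Real.exp la.re := by
    rw [← hla, Complex.norm_exp]
  have he2e1 : ‖E2‖ = ‖E1‖ * (Real.exp la.re)⁻¹ := by
    have h := congrArg norm hE21
    rw [norm_div] at h
    simp only [Complex.norm_exp, Complex.neg_re, Complex.ofReal_re] at h
    rw [Real.exp_neg] at h
    have habsE1 : ‖E1‖ ≠ 0 := by
      simpa using (norm_ne_zero_iff.mpr hE1ne)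
    rw [div_eq_iff habsE1] at h
    rw [h]
    ring
  have haz : a - z ≠ 0 := sub_ne_zero.mpr hne
  have hnormT : ‖T‖ = ‖(1 - (starRingEnd ℂ) a * z) / (a - z)‖ := by
    have hza_eq : z/a - 1 = (z - a)/a := by field_simp
    have hneg1 : z * (starRingEnd ℂ) a - 1 = -(1 - (starRingEnd ℂ) a * z) := by ring
    have hneg2 : z - a = -(a - z) := by ring
    rw [hT3, hneg1, hza_eq, hneg2, norm_div, norm_div, norm_mul, norm_mul, norm_div,
      norm_neg, norm_neg, he2e1, hnA]
    have hE1pos : (0:ℝ) < ‖E1‖ := norm_pos_iff.mpr hE1ne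
    have hazpos : (0:ℝ) < ‖a - z‖ := norm_pos_iff.mpr haz
    have hapos : (0:ℝ) < Real.exp la.re := Real.exp_pos _
    have habsE1 : ‖E1‖ ≠ 0 := by
      exact hE1pos.ne'
    field_simp
  constructor
  · exact habs
  · exact hval.trans (by rw [hnormT])
end

section
/- Fix a ∈ (0,1) with log a real, and define G(z) = log|(log z + log a)/(log z - log a)| + ∑_{k=1}^{∞} log|((log z + log a)² + 4π²k²)/((log z - log a)² + 4π²k²)| for z ∈ 𝔻 \ {0}, where log z = ln|z| + i Arg z. Then G remains bounded as z → 0; consequently G extends to a harmonic function on all of 𝔻. -/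
open Complex Metric Set Filter Topology
open intervalIntegral

/-- A function is harmonic on `s` if it is continuous on `s` and satisfies the
mean-value equality on every closed disk contained in `s`. -/
def HarmonicOn (u : ℂ → ℝ) (s : Set ℂ) : Prop :=
  ContinuousOn u s ∧
    ∀ c ∈ s, ∀ R : ℝ, 0 < R → closedBall c R ⊆ s →
      u c = (1/(2*Real.pi)) * ∫ θ in (0:ℝ)..(2*Real.pi),
        u (c + (R:ℂ) * Complex.exp (θ * Complex.I))

/-- The series expression for the Green's function of the punctured disk, for a
pole at a real point `a ∈ (0,1)`; here `log z` is the principal logarithm. -/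
noncomputable def greenSeries (a : ℝ) (z : ℂ) : ℝ :=
  Real.log ‖(Complex.log z + (Real.log a : ℂ)) / (Complex.log z - (Real.log a : ℂ))‖ +
    ∑' k : ℕ,
      Real.log ‖((Complex.log z + (Real.log a : ℂ))^2 + 4*Real.pi^2*((k:ℂ)+1)^2) /
        ((Complex.log z - (Real.log a : ℂ))^2 + 4*Real.pi^2*((k:ℂ)+1)^2)‖

lemma meanValueC {f : ℂ → ℂ} {c : ℂ} {R : ℝ} (hR : 0 < R)
    (hc : ContinuousOn f (closedBall c R))
    (hd : ∀ z ∈ ball c R, DifferentiableAt ℂ f z) :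
    (∫ θ in (0:ℝ)..(2*Real.pi), f (c + (R:ℂ) * Complex.exp (θ * Complex.I)))
      = 2*Real.pi * f c := by
  have key := Complex.circleIntegral_sub_center_inv_smul_of_differentiable_on_off_countable
    hR Set.countable_empty hc (fun z hz => hd z hz.1)
  rw [circleIntegral] at key
  have h1 : ∀ θ : ℝ, deriv (circleMap c R) θ •
      ((circleMap c R θ - c)⁻¹ • f (circleMap c R θ))
      = Complex.I * f (c + (R:ℂ) * Complex.exp (θ * Complex.I)) := by
    intro θ
    have hne : circleMap 0 R θ ≠ 0 := by
      simp [circleMap, hR.ne', Complex.exp_ne_zero]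
    have harg : circleMap c R θ = c + (R:ℂ) * Complex.exp (θ * Complex.I) := rfl
    rw [deriv_circleMap, circleMap_sub_center, smul_eq_mul, smul_eq_mul, harg,
      mul_comm (circleMap 0 R θ) Complex.I, mul_assoc, ← mul_assoc (circleMap 0 R θ),
      mul_inv_cancel₀ hne, one_mul]
  rw [intervalIntegral.integral_congr (fun θ _ => h1 θ),
    intervalIntegral.integral_const_mul] at key
  have h2 : (2 * Real.pi * Complex.I : ℂ) • f c = Complex.I * (2*Real.pi * f c) := by
    simp [smul_eq_mul]; ring
  rw [h2] at key
  exact mul_left_cancel₀ Complex.I_ne_zero key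

lemma slit_one_add {w z : ℂ} (hw : ‖w‖ < 1) (hz : ‖z‖ ≤ 1) :
    1 + w * z ∈ Complex.slitPlane := by
  refine Or.inl ?_
  have h1 : |(w * z).re| ≤ ‖w * z‖ := Complex.abs_re_le_norm _
  have h2 : ‖w * z‖ < 1 := by
    rw [norm_mul]
    calc ‖w‖ * ‖z‖ ≤ ‖w‖ * 1 := by
          exact mul_le_mul_of_nonneg_left hz (norm_nonneg _)
      _ < 1 := by simpa using hw
  have := abs_le.1 h1
  simp only [Complex.add_re, Complex.one_re]
  linarith

lemma integral_log_norm_one_add {w : ℂ} (hw : ‖w‖ < 1) :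
    (∫ θ in (0:ℝ)..(2*Real.pi),
      Real.log ‖1 + w * Complex.exp (θ * Complex.I)‖) = 0 := by
  set f : ℂ → ℂ := fun z => Complex.log (1 + w * z) with hf
  have hd : ∀ z ∈ closedBall (0:ℂ) 1, DifferentiableAt ℂ f z := by
    intro z hz
    have hzn : ‖z‖ ≤ 1 := by simpa [Metric.mem_closedBall] using hz
    exact (Complex.differentiableAt_log (slit_one_add hw hzn)).comp z
      ((differentiableAt_const _).add ((differentiableAt_const w).mul differentiableAt_id))
  have hc : ContinuousOn f (closedBall (0:ℂ) 1) :=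
    fun z hz => (hd z hz).continuousAt.continuousWithinAt
  have key := meanValueC one_pos hc (fun z hz => hd z (ball_subset_closedBall hz))
  have hexp : ∀ θ : ℝ, ‖(0:ℂ) + (1:ℝ) * Complex.exp (θ * Complex.I)‖ = 1 := by
    intro θ
    simp [Complex.norm_exp_ofReal_mul_I]
  have hcont : Continuous fun θ : ℝ => f ((0:ℂ) + (1:ℝ) * Complex.exp (θ * Complex.I)) := by
    rw [continuous_iff_continuousAt]
    intro θ
    have hmem : ((0:ℂ) + (1:ℝ) * Complex.exp (θ * Complex.I)) ∈ closedBall (0:ℂ) 1 := by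
      simp only [Metric.mem_closedBall, dist_zero_right]
      exact le_of_eq (hexp θ)
    have hinner : Continuous fun θ : ℝ => (0:ℂ) + (1:ℝ) * Complex.exp (θ * Complex.I) := by
      continuity
    exact ContinuousAt.comp (g := f) (hd _ hmem).continuousAt hinner.continuousAt
  have hInt : IntervalIntegrable (fun θ : ℝ => f ((0:ℂ) + (1:ℝ) * Complex.exp (θ * Complex.I)))
      MeasureTheory.volume 0 (2*Real.pi) := hcont.intervalIntegrable _ _
  have hre := Complex.reCLM.intervalIntegral_comp_comm hInt
  have hf0 : f 0 = 0 := by simp [hf]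
  have hkey0 : (∫ θ in (0:ℝ)..(2*Real.pi), f ((0:ℂ) + (1:ℝ) * Complex.exp (θ * Complex.I))) = 0 := by
    rw [key, hf0, mul_zero]
  have this2 : (∫ θ in (0:ℝ)..(2*Real.pi), (f ((0:ℂ) + (1:ℝ) * Complex.exp (θ * Complex.I))).re) = 0 := by
    have h9 : Complex.reCLM (∫ θ in (0:ℝ)..(2*Real.pi),
        f ((0:ℂ) + (1:ℝ) * Complex.exp (θ * Complex.I))) = 0 := by
      rw [hkey0]; simp
    have h := hre.trans h9
    simpa using h
  have hcongr : (∫ θ in (0:ℝ)..(2*Real.pi), Real.log ‖1 + w * Complex.exp (θ * Complex.I)‖)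
      = ∫ θ in (0:ℝ)..(2*Real.pi), (f ((0:ℂ) + (1:ℝ) * Complex.exp (θ * Complex.I))).re :=
    intervalIntegral.integral_congr (fun θ _ => by
      simp [hf, Complex.log_re])
  rw [hcongr, this2]

lemma one_add_ne_zero_of_norm_lt_one {x : ℂ} (hx : ‖x‖ < 1) : (1:ℂ) + x ≠ 0 := by
  intro h
  have : ‖(1:ℂ)‖ = ‖-x‖ := by rw [show (1:ℂ) = -x by linear_combination h]
  simp at this
  rw [this] at hx
  exact lt_irrefl _ hx

lemma integral_log_norm_circle {c p : ℂ} {R : ℝ} (hR : 0 < R) (hp : R < ‖c - p‖) :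
    (∫ θ in (0:ℝ)..(2*Real.pi), Real.log ‖c + (R:ℂ)*Complex.exp (θ*Complex.I) - p‖)
      = 2*Real.pi * Real.log ‖c - p‖ := by
  set q : ℂ := c - p with hqdef
  have hq : q ≠ 0 := by
    intro h; rw [h] at hp; simp at hp; linarith
  set w : ℂ := (R:ℂ)/q with hwdef
  have hwn : ‖w‖ < 1 := by
    rw [hwdef, norm_div]
    rw [div_lt_one (norm_pos_iff.2 hq)]
    simpa [Complex.norm_real, abs_of_pos hR] using hp
  have hwe : ∀ θ : ℝ, ‖w * Complex.exp (θ*Complex.I)‖ < 1 := by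
    intro θ
    rw [norm_mul, Complex.norm_exp_ofReal_mul_I, mul_one]
    exact hwn
  have hpt : ∀ θ : ℝ, c + (R:ℂ)*Complex.exp (θ*Complex.I) - p
      = q * (1 + w * Complex.exp (θ*Complex.I)) := by
    intro θ
    have e : q * ((R:ℂ)/q) = R := by field_simp
    rw [hwdef, mul_add, mul_one, ← mul_assoc, e, hqdef]
    ring
  have hcongr : (∫ θ in (0:ℝ)..(2*Real.pi), Real.log ‖c + (R:ℂ)*Complex.exp (θ*Complex.I) - p‖)
      = ∫ θ in (0:ℝ)..(2*Real.pi),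
          (Real.log ‖q‖ + Real.log ‖1 + w * Complex.exp (θ*Complex.I)‖) := by
    apply intervalIntegral.integral_congr
    intro θ _
    simp only [hpt θ, norm_mul]
    rw [Real.log_mul (norm_ne_zero_iff.2 hq)
      (norm_ne_zero_iff.2 (one_add_ne_zero_of_norm_lt_one (hwe θ)))]
  rw [hcongr]
  have hcont2 : Continuous fun θ : ℝ => Real.log ‖1 + w * Complex.exp (θ*Complex.I)‖ := by
    apply Continuous.log
    · continuity
    · intro θ
      exact norm_ne_zero_iff.2 (one_add_ne_zero_of_norm_lt_one (hwe θ))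
  rw [intervalIntegral.integral_add (intervalIntegrable_const)
    (hcont2.intervalIntegrable _ _), integral_log_norm_one_add hwn, add_zero,
    intervalIntegral.integral_const, smul_eq_mul]
  ring

lemma tendsto_sinh_prod (t : ℂ) :
    Tendsto (fun n : ℕ => t/2 * ∏ j ∈ Finset.range n,
        (1 + t^2/(4*(Real.pi:ℂ)^2*((j:ℂ)+1)^2))) atTop (𝓝 (Complex.sinh (t/2))) := by
  have hπ : (Real.pi:ℂ) ≠ 0 := by
    simpa using Real.pi_pos.ne'
  have h := Complex.tendsto_euler_sin_prod (t*Complex.I/(2*(Real.pi:ℂ)))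
  have harg : (Real.pi:ℂ) * (t*Complex.I/(2*(Real.pi:ℂ))) = (t/2)*Complex.I := by
    field_simp
  rw [harg, Complex.sin_mul_I] at h
  have hterm : ∀ j : ℕ, (1:ℂ) - (t*Complex.I/(2*(Real.pi:ℂ)))^2/((j:ℂ)+1)^2
      = 1 + t^2/(4*(Real.pi:ℂ)^2*((j:ℂ)+1)^2) := by
    intro j
    have hj : ((j:ℂ)+1) ≠ 0 := Nat.cast_add_one_ne_zero j
    field_simp
    ring_nf
    rw [Complex.I_sq]
    ring
  have heq : ∀ n : ℕ, t/2*Complex.I *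
      ∏ j ∈ Finset.range n, ((1:ℂ) - (t*Complex.I/(2*(Real.pi:ℂ)))^2/((j:ℂ)+1)^2)
      = (t/2 * ∏ j ∈ Finset.range n, (1 + t^2/(4*(Real.pi:ℂ)^2*((j:ℂ)+1)^2))) * Complex.I := by
    intro n
    rw [Finset.prod_congr rfl (fun j _ => hterm j)]
    ring
  rw [tendsto_congr heq] at h
  have h2 := h.mul_const (Complex.I)⁻¹
  simp only [mul_assoc, mul_inv_cancel₀ Complex.I_ne_zero, mul_one] at h2
  refine h2.congr fun n => ?_
  refine congrArg _ (Finset.prod_congr rfl fun j _ => ?_)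
  ring


lemma abs_log_norm_one_add_le {x : ℂ} (hx : ‖x‖ ≤ 1/2) :
    |Real.log ‖1 + x‖| ≤ 2 * ‖x‖ := by
  set y := ‖1 + x‖ with hy
  have hy1 : 1 - ‖x‖ ≤ y := by
    have h : ‖(1:ℂ)‖ ≤ ‖1 + x‖ + ‖x‖ := by
      calc ‖(1:ℂ)‖ = ‖(1 + x) - x‖ := by ring_nf
        _ ≤ ‖1 + x‖ + ‖x‖ := norm_sub_le _ _
    simp only [norm_one] at h
    linarith
  have hy2 : |y - 1| ≤ ‖x‖ := by
    have := abs_norm_sub_norm_le (1 + x) 1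
    simpa using this
  have hyhalf : (1:ℝ)/2 ≤ y := by linarith
  have hypos : 0 < y := by linarith
  rcases le_or_gt y 1 with hle | hlt
  · have hlog : Real.log y ≤ 0 := Real.log_nonpos (by linarith) hle
    rw [_root_.abs_of_nonpos hlog]
    have hinv : Real.log y⁻¹ ≤ y⁻¹ - 1 := Real.log_le_sub_one_of_pos (by positivity)
    rw [Real.log_inv] at hinv
    have h1 : y⁻¹ - 1 ≤ 2*(1 - y) := by
      rw [inv_eq_one_div]
      rw [div_sub' hypos.ne']
      rw [div_le_iff₀ hypos]
      nlinarith
    have h2 : 1 - y ≤ ‖x‖ := by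
      have := abs_le.1 hy2
      linarith [this.1]
    linarith
  · have hlog : 0 ≤ Real.log y := Real.log_nonneg hlt.le
    rw [_root_.abs_of_nonneg hlog]
    have := Real.log_le_sub_one_of_pos hypos
    have h2 : y - 1 ≤ ‖x‖ := by
      have := abs_le.1 hy2
      linarith [this.1, this.2]
    have hxn : 0 ≤ ‖x‖ := norm_nonneg x
    linarith

lemma denom_ne_zero {t : ℂ} (ht : |t.im| ≤ Real.pi) (k : ℕ) :
    t^2 + 4*(Real.pi:ℂ)^2*((k:ℂ)+1)^2 ≠ 0 := by
  intro h
  set s : ℝ := 2*Real.pi*((k:ℝ)+1) with hs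
  have hspos : Real.pi < s := by
    have hpi := Real.pi_pos
    have : (0:ℝ) ≤ (k:ℝ) := Nat.cast_nonneg k
    nlinarith
  have hfact : (t - Complex.I*(s:ℂ)) * (t + Complex.I*(s:ℂ)) = 0 := by
    have hsc : (Complex.I*(s:ℂ))^2 = -(4*(Real.pi:ℂ)^2*((k:ℂ)+1)^2) := by
      rw [mul_pow, Complex.I_sq, hs]
      push_cast
      ring
    linear_combination h - hsc
  rcases mul_eq_zero.1 hfact with h1 | h1
  · have : t = Complex.I*(s:ℂ) := by linear_combination h1
    have : t.im = s := by rw [this]; simp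
    rw [this] at ht
    rw [_root_.abs_of_pos (by linarith [Real.pi_pos])] at ht
    linarith
  · have : t = -(Complex.I*(s:ℂ)) := by linear_combination h1
    have : t.im = -s := by rw [this]; simp
    rw [this] at ht
    rw [_root_.abs_of_neg (by linarith [Real.pi_pos])] at ht
    linarith

lemma greenSeries_eq {a : ℝ} (ha : a ∈ Set.Ioo (0:ℝ) 1) {z : ℂ} (hz0 : z ≠ 0)
    (hza : z ≠ (a:ℂ)) (hz1 : ‖z‖ < 1) :
    greenSeries a z = Real.log ‖((a:ℂ)*z - 1)/(z - (a:ℂ))‖ := by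
  have hπ := Real.pi_pos
  set la : ℂ := ((Real.log a : ℝ) : ℂ) with hla
  set r : ℂ := Complex.log z with hr
  have hexpr : Complex.exp r = z := Complex.exp_log hz0
  have hexpla : Complex.exp la = (a:ℂ) := by
    rw [hla, ← Complex.ofReal_exp, Real.exp_log ha.1]
  set u : ℂ := r + la with hu
  set v : ℂ := r - la with hv
  have hu0 : u ≠ 0 := by
    intro h
    have hrla : r = -la := by linear_combination h
    have : z = ((a:ℝ)⁻¹ : ℝ) := by
      rw [← hexpr, hrla, Complex.exp_neg, hexpla]
      push_cast
      ring
    rw [this] at hz1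
    rw [Complex.norm_real, Real.norm_eq_abs, _root_.abs_of_pos (inv_pos.2 ha.1)] at hz1
    have hinv : a * a⁻¹ = 1 := mul_inv_cancel₀ ha.1.ne'
    have ht : 0 < a⁻¹ := inv_pos.2 ha.1
    have h2 := ha.2
    nlinarith
  have hv0 : v ≠ 0 := by
    intro h
    have hrla : r = la := by linear_combination h
    exact hza (by rw [← hexpr, hrla, hexpla])
  have him : |r.im| ≤ Real.pi := by
    rw [hr, Complex.log_im]
    exact Complex.abs_arg_le_pi z
  have huim : |u.im| ≤ Real.pi := by
    rw [hu]
    simpa [hla] using him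
  have hvim : |v.im| ≤ Real.pi := by
    rw [hv]
    simpa [hla] using him
  set N : ℕ → ℂ := fun k => u^2 + 4*(Real.pi:ℂ)^2*((k:ℂ)+1)^2 with hN
  set D : ℕ → ℂ := fun k => v^2 + 4*(Real.pi:ℂ)^2*((k:ℂ)+1)^2 with hD
  have hN0 : ∀ k, N k ≠ 0 := fun k => denom_ne_zero huim k
  have hD0 : ∀ k, D k ≠ 0 := fun k => denom_ne_zero hvim k
  have hc0 : ∀ k : ℕ, (4*(Real.pi:ℂ)^2*((k:ℂ)+1)^2) ≠ 0 := by
    intro k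
    have h1 : ((k:ℂ)+1) ≠ 0 := Nat.cast_add_one_ne_zero k
    have h2 : (Real.pi:ℂ) ≠ 0 := by
      simpa using hπ.ne'
    exact mul_ne_zero (mul_ne_zero (by norm_num) (pow_ne_zero 2 h2)) (pow_ne_zero 2 h1)
  -- sinh algebra
  set w : ℂ := Complex.exp (r/2) with hw
  set sa : ℂ := Complex.exp (la/2) with hsa
  have hw0 : w ≠ 0 := Complex.exp_ne_zero _
  have hsa0 : sa ≠ 0 := Complex.exp_ne_zero _
  have hw2 : w * w = z := by
    rw [hw, ← Complex.exp_add, ← hexpr]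
    congr 1
    ring
  have hsa2 : sa * sa = (a:ℂ) := by
    rw [hsa, ← Complex.exp_add, ← hexpla]
    congr 1
    ring
  have hexpu : Complex.exp (u/2) = w * sa := by
    rw [hw, hsa, ← Complex.exp_add]
    congr 1
    rw [hu]; ring
  have hexpv : Complex.exp (v/2) = w * sa⁻¹ := by
    rw [hw, hsa, ← Complex.exp_neg, ← Complex.exp_add]
    congr 1
    rw [hv]; ring
  set A : ℂ := Complex.sinh (u/2) with hA
  set B : ℂ := Complex.sinh (v/2) with hB
  have h2wsa : (2*w*sa) ≠ 0 := by
    exact mul_ne_zero (mul_ne_zero two_ne_zero hw0) hsa0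
  have hsinhu : A * (2*w*sa) = z*(a:ℂ) - 1 := by
    rw [hA, Complex.sinh, Complex.exp_neg, hexpu, ← hw2, ← hsa2]
    field_simp
  have hexpnv : Complex.exp (-(v/2)) = sa * w⁻¹ := by
    rw [hsa, hw, ← Complex.exp_neg, ← Complex.exp_add]
    congr 1
    rw [hv]; ring
  have hsinhv : B * (2*w*sa) = z - (a:ℂ) := by
    rw [hB, Complex.sinh, hexpv, hexpnv]
    have e : (w*sa⁻¹ - sa*w⁻¹)/2 * (2*w*sa) = w*w*(sa⁻¹*sa) - sa*sa*(w⁻¹*w) := by ring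
    rw [e, inv_mul_cancel₀ hsa0, inv_mul_cancel₀ hw0, mul_one, mul_one, hw2, hsa2]
  have hza1 : z*(a:ℂ) - 1 ≠ 0 := by
    intro h
    have h1 : z * (a:ℂ) = 1 := by linear_combination h
    have h2 := congrArg (fun x : ℂ => ‖x‖) h1
    simp only [norm_mul, norm_one, Complex.norm_real, Real.norm_eq_abs,
      _root_.abs_of_pos ha.1] at h2
    nlinarith [ha.1, ha.2, norm_nonneg z]
  have hzma : z - (a:ℂ) ≠ 0 := sub_ne_zero.2 hza
  have hA0 : A ≠ 0 := by
    intro h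
    exact hza1 (by rw [← hsinhu, h, zero_mul])
  have hB0 : B ≠ 0 := by
    intro h
    exact hzma (by rw [← hsinhv, h, zero_mul])
  -- Euler limits
  have hprodN : Tendsto (fun n : ℕ => ∏ j ∈ Finset.range n, (N j / (4*(Real.pi:ℂ)^2*((j:ℂ)+1)^2)))
      atTop (𝓝 (2*A/u)) := by
    have h := (tendsto_sinh_prod u).const_mul (2/u)
    have hterm : ∀ j : ℕ, (1:ℂ) + u^2/(4*(Real.pi:ℂ)^2*((j:ℂ)+1)^2)
        = N j / (4*(Real.pi:ℂ)^2*((j:ℂ)+1)^2) := by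
      intro j
      rw [hN, add_div, div_self (hc0 j)]
      ring
    have heq : ∀ n : ℕ, (2/u) * (u/2 * ∏ j ∈ Finset.range n, (1 + u^2/(4*(Real.pi:ℂ)^2*((j:ℂ)+1)^2)))
        = ∏ j ∈ Finset.range n, (N j / (4*(Real.pi:ℂ)^2*((j:ℂ)+1)^2)) := by
      intro n
      rw [show (2/u) * (u/2 * ∏ j ∈ Finset.range n, (1 + u^2/(4*(Real.pi:ℂ)^2*((j:ℂ)+1)^2)))
          = ∏ j ∈ Finset.range n, (1 + u^2/(4*(Real.pi:ℂ)^2*((j:ℂ)+1)^2)) from by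
        field_simp]
      exact Finset.prod_congr rfl fun j _ => hterm j
    rw [tendsto_congr heq] at h
    convert h using 2
    ring
  have hprodD : Tendsto (fun n : ℕ => ∏ j ∈ Finset.range n, (D j / (4*(Real.pi:ℂ)^2*((j:ℂ)+1)^2)))
      atTop (𝓝 (2*B/v)) := by
    have h := (tendsto_sinh_prod v).const_mul (2/v)
    have hterm : ∀ j : ℕ, (1:ℂ) + v^2/(4*(Real.pi:ℂ)^2*((j:ℂ)+1)^2)
        = D j / (4*(Real.pi:ℂ)^2*((j:ℂ)+1)^2) := by
      intro j
      rw [hD, add_div, div_self (hc0 j)]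
      ring
    have heq : ∀ n : ℕ, (2/v) * (v/2 * ∏ j ∈ Finset.range n, (1 + v^2/(4*(Real.pi:ℂ)^2*((j:ℂ)+1)^2)))
        = ∏ j ∈ Finset.range n, (D j / (4*(Real.pi:ℂ)^2*((j:ℂ)+1)^2)) := by
      intro n
      rw [show (2/v) * (v/2 * ∏ j ∈ Finset.range n, (1 + v^2/(4*(Real.pi:ℂ)^2*((j:ℂ)+1)^2)))
          = ∏ j ∈ Finset.range n, (1 + v^2/(4*(Real.pi:ℂ)^2*((j:ℂ)+1)^2)) from by
        field_simp]
      exact Finset.prod_congr rfl fun j _ => hterm j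
    rw [tendsto_congr heq] at h
    convert h using 2
    ring
  have hBv : (2*B/v) ≠ 0 := div_ne_zero (mul_ne_zero two_ne_zero hB0) hv0
  set L : ℂ := (2*A/u)/(2*B/v) with hL
  have hL0 : L ≠ 0 := div_ne_zero (div_ne_zero (mul_ne_zero two_ne_zero hA0) hu0) hBv
  have hratio : Tendsto (fun n : ℕ => ∏ j ∈ Finset.range n, (N j / D j)) atTop (𝓝 L) := by
    have h := hprodN.div hprodD hBv
    refine h.congr fun n => ?_
    simp only [Pi.div_apply]
    rw [show (∏ j ∈ Finset.range n, (N j / (4*(Real.pi:ℂ)^2*((j:ℂ)+1)^2))) /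
        (∏ j ∈ Finset.range n, (D j / (4*(Real.pi:ℂ)^2*((j:ℂ)+1)^2)))
        = ∏ j ∈ Finset.range n, ((N j / (4*(Real.pi:ℂ)^2*((j:ℂ)+1)^2)) /
          (D j / (4*(Real.pi:ℂ)^2*((j:ℂ)+1)^2))) from (Finset.prod_div_distrib _ _).symm]
    refine Finset.prod_congr rfl fun j _ => ?_
    have h1 := hc0 j
    have h2 := hD0 j
    field_simp
  -- the real log series
  set g : ℕ → ℝ := fun k => Real.log ‖N k / D k‖ with hg
  have hfk0 : ∀ k, N k / D k ≠ 0 := fun k => div_ne_zero (hN0 k) (hD0 k)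
  have hpartial : ∀ n : ℕ, ∑ k ∈ Finset.range n, g k
      = Real.log ‖∏ k ∈ Finset.range n, (N k / D k)‖ := by
    intro n
    rw [norm_prod, Real.log_prod (fun k _ => norm_ne_zero_iff.2 (hfk0 k))]
  have hlimsum : Tendsto (fun n : ℕ => ∑ k ∈ Finset.range n, g k) atTop (𝓝 (Real.log ‖L‖)) := by
    have h1 : Tendsto (fun n : ℕ => ‖∏ k ∈ Finset.range n, (N k / D k)‖) atTop (𝓝 ‖L‖) :=
      hratio.norm
    have h2 := (Real.continuousAt_log (norm_ne_zero_iff.2 hL0)).tendsto.comp h1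
    exact h2.congr fun n => (hpartial n).symm
  -- summability
  have hDlow : ∀ᶠ k : ℕ in atTop, max ‖v^2‖ (2*‖u^2 - v^2‖) ≤ 2*Real.pi^2*((k:ℝ)+1)^2 := by
    have h1 : Tendsto (fun k : ℕ => ((k:ℝ)+1)) atTop atTop :=
      tendsto_atTop_add_const_right _ 1 tendsto_natCast_atTop_atTop
    have h2 : Tendsto (fun k : ℕ => 2*Real.pi^2*((k:ℝ)+1)^2) atTop atTop := by
      have h3 := h1.atTop_mul_atTop₀ h1
      have h4 := h3.const_mul_atTop (show (0:ℝ) < 2*Real.pi^2 by positivity)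
      refine h4.congr fun k => ?_
      ring
    exact h2.eventually_ge_atTop _
  have hgbound : ∀ᶠ k : ℕ in atTop, ‖g k‖ ≤ (2*‖u^2-v^2‖/Real.pi^2) * (1/((k:ℝ)+1)^2) := by
    filter_upwards [hDlow] with k hk
    have hkp : (0:ℝ) < ((k:ℝ)+1)^2 := by positivity
    have hc2 : (0:ℝ) < 2*Real.pi^2*((k:ℝ)+1)^2 := by positivity
    have hDnorm : 2*Real.pi^2*((k:ℝ)+1)^2 ≤ ‖D k‖ := by
      have h5 : ‖(4*(Real.pi:ℂ)^2*((k:ℂ)+1)^2)‖ - ‖v^2‖ ≤ ‖D k‖ := by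
        have h6 := norm_sub_norm_le (4*(Real.pi:ℂ)^2*((k:ℂ)+1)^2) (-(v^2))
        rw [sub_neg_eq_add, norm_neg] at h6
        calc ‖(4*(Real.pi:ℂ)^2*((k:ℂ)+1)^2)‖ - ‖v^2‖
            ≤ ‖4*(Real.pi:ℂ)^2*((k:ℂ)+1)^2 + v^2‖ := h6
          _ = ‖D k‖ := by rw [add_comm]
      have h6 : ‖(4*(Real.pi:ℂ)^2*((k:ℂ)+1)^2)‖ = 4*Real.pi^2*((k:ℝ)+1)^2 := by
        have h7 : (4*(Real.pi:ℂ)^2*((k:ℂ)+1)^2) = ((4*Real.pi^2*((k:ℝ)+1)^2 : ℝ) : ℂ) := by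
          push_cast
          ring
        rw [h7, Complex.norm_real, Real.norm_eq_abs, _root_.abs_of_pos (by positivity)]
      have h7 : ‖v^2‖ ≤ 2*Real.pi^2*((k:ℝ)+1)^2 := le_trans (le_max_left _ _) hk
      rw [h6] at h5
      linarith
    have hDpos : (0:ℝ) < ‖D k‖ := lt_of_lt_of_le hc2 hDnorm
    have htk : ‖(u^2 - v^2)/(D k)‖ ≤ ‖u^2-v^2‖/(2*Real.pi^2*((k:ℝ)+1)^2) := by
      rw [norm_div]
      gcongr
    have htk2 : ‖(u^2 - v^2)/(D k)‖ ≤ 1/2 := by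
      refine htk.trans ?_
      rw [div_le_iff₀ hc2]
      have h8 : 2*‖u^2 - v^2‖ ≤ 2*Real.pi^2*((k:ℝ)+1)^2 := le_trans (le_max_right _ _) hk
      linarith
    have hNDk : N k / D k = 1 + (u^2 - v^2)/D k := by
      have h9 := hD0 k
      rw [show (1:ℂ) + (u^2 - v^2)/D k = (D k + (u^2 - v^2))/D k from by
        rw [add_div, div_self h9]]
      congr 1
      simp only [hN, hD]
      ring
    have h10 : ‖g k‖ = |Real.log ‖(1:ℂ) + (u^2 - v^2)/D k‖| := by
      simp only [hg, Real.norm_eq_abs, hNDk]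
    rw [h10]
    have e1 : 2 * (‖u^2-v^2‖/(2*Real.pi^2*((k:ℝ)+1)^2))
        = ‖u^2-v^2‖/(Real.pi^2*((k:ℝ)+1)^2) := by
      field_simp
    have e2 : ‖u^2-v^2‖/(Real.pi^2*((k:ℝ)+1)^2) ≤ (2*‖u^2-v^2‖)/(Real.pi^2*((k:ℝ)+1)^2) := by
      gcongr
      linarith [norm_nonneg (u^2-v^2)]
    have e3 : (2*‖u^2-v^2‖)/(Real.pi^2*((k:ℝ)+1)^2)
        = (2*‖u^2-v^2‖/Real.pi^2) * (1/((k:ℝ)+1)^2) := by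
      field_simp
    calc |Real.log ‖(1:ℂ) + (u^2 - v^2)/D k‖| ≤ 2 * ‖(u^2 - v^2)/D k‖ :=
          abs_log_norm_one_add_le htk2
      _ ≤ 2 * (‖u^2-v^2‖/(2*Real.pi^2*((k:ℝ)+1)^2)) := by linarith
      _ = ‖u^2-v^2‖/(Real.pi^2*((k:ℝ)+1)^2) := e1
      _ ≤ (2*‖u^2-v^2‖)/(Real.pi^2*((k:ℝ)+1)^2) := e2
      _ = (2*‖u^2-v^2‖/Real.pi^2) * (1/((k:ℝ)+1)^2) := e3
  have hmaj : Summable (fun k : ℕ => (2*‖u^2-v^2‖/Real.pi^2) * (1/((k:ℝ)+1)^2)) := by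
    apply Summable.mul_left
    have h1 : Summable (fun n : ℕ => 1/(n:ℝ)^2) := Real.summable_one_div_nat_pow.2 one_lt_two
    have h2 := (summable_nat_add_iff 1).2 h1
    refine h2.congr fun k => ?_
    push_cast
    ring
  have hsummable : Summable g := Summable.of_norm_bounded_eventually_nat hmaj hgbound
  have htsum : ∑' k, g k = Real.log ‖L‖ :=
    tendsto_nhds_unique hsummable.hasSum.tendsto_sum_nat hlimsum
  -- assembly
  have hGS : greenSeries a z = Real.log ‖u/v‖ + ∑' k, g k := rfl
  rw [hGS, htsum]
  have huv0 : u/v ≠ 0 := div_ne_zero hu0 hv0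
  rw [← Real.log_mul (norm_ne_zero_iff.2 huv0) (norm_ne_zero_iff.2 hL0), ← norm_mul]
  have hfinal : (u/v) * L = ((a:ℂ)*z - 1)/(z - (a:ℂ)) := by
    have hABr : A/B = (z*(a:ℂ)-1)/(z-(a:ℂ)) := by
      rw [← hsinhu, ← hsinhv, mul_div_mul_right _ _ h2wsa]
    calc (u/v) * L = A/B := by
          rw [hL]
          field_simp
      _ = (z*(a:ℂ)-1)/(z-(a:ℂ)) := hABr
      _ = ((a:ℂ)*z-1)/(z-(a:ℂ)) := by rw [mul_comm z]
  rw [hfinal]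

lemma phi_continuousAt {a : ℝ} (ha : a ∈ Set.Ioo (0:ℝ) 1) {z : ℂ} (hza : z ≠ (a:ℂ))
    (hz1 : ‖z‖ < 1) :
    ContinuousAt (fun z : ℂ => Real.log ‖((a:ℂ)*z - 1)/(z - (a:ℂ))‖) z := by
  have h1 : z - (a:ℂ) ≠ 0 := sub_ne_zero.2 hza
  have h2 : (a:ℂ)*z - 1 ≠ 0 := by
    intro h
    have h3 : (a:ℂ)*z = 1 := by linear_combination h
    have h4 := congrArg (fun x : ℂ => ‖x‖) h3
    simp only [norm_mul, norm_one, Complex.norm_real, Real.norm_eq_abs,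
      _root_.abs_of_pos ha.1] at h4
    nlinarith [ha.1, ha.2, norm_nonneg z]
  have hF : ContinuousAt (fun z : ℂ => ((a:ℂ)*z - 1)/(z - (a:ℂ))) z :=
    ContinuousAt.div (by fun_prop) (by fun_prop) h1
  have hne : ‖((a:ℂ)*z - 1)/(z - (a:ℂ))‖ ≠ 0 :=
    norm_ne_zero_iff.2 (div_ne_zero h2 h1)
  exact ContinuousAt.comp (g := Real.log) (Real.continuousAt_log hne) hF.norm

lemma phi_decomp {a : ℝ} (ha : a ∈ Set.Ioo (0:ℝ) 1) {z : ℂ} (hza : z ≠ (a:ℂ))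
    (hz1 : ‖z‖ < 1) :
    Real.log ‖((a:ℂ)*z - 1)/(z - (a:ℂ))‖
      = Real.log a + Real.log ‖z - ((a⁻¹:ℝ):ℂ)‖ - Real.log ‖z - (a:ℂ)‖ := by
  have h1 : z - (a:ℂ) ≠ 0 := sub_ne_zero.2 hza
  have hainv : (1:ℝ) < a⁻¹ := by
    have := mul_inv_cancel₀ ha.1.ne'
    have := inv_pos.2 ha.1
    nlinarith [ha.2]
  have h3 : z - ((a⁻¹:ℝ):ℂ) ≠ 0 := by
    intro h
    have h4 : z = ((a⁻¹:ℝ):ℂ) := by linear_combination h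
    rw [h4, Complex.norm_real, Real.norm_eq_abs, _root_.abs_of_pos (inv_pos.2 ha.1)] at hz1
    linarith
  have hfac : (a:ℂ)*z - 1 = (a:ℂ) * (z - ((a⁻¹:ℝ):ℂ)) := by
    have : (a:ℂ) * ((a⁻¹:ℝ):ℂ) = 1 := by
      push_cast
      rw [mul_inv_cancel₀]
      exact_mod_cast ha.1.ne'
    rw [mul_sub, this]
  have h2 : (a:ℂ)*z - 1 ≠ 0 := by
    rw [hfac]
    exact mul_ne_zero (by exact_mod_cast ha.1.ne') h3
  rw [norm_div, Real.log_div (norm_ne_zero_iff.2 h2) (norm_ne_zero_iff.2 h1), hfac, norm_mul,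
    Complex.norm_real, Real.norm_eq_abs, _root_.abs_of_pos ha.1,
    Real.log_mul ha.1.ne' (norm_ne_zero_iff.2 h3)]

lemma ball_radius_bound {c : ℂ} {R : ℝ} (hR : 0 < R) (hsub : closedBall c R ⊆ ball (0:ℂ) 1) :
    R + ‖c‖ < 1 := by
  rcases eq_or_ne c 0 with hc | hc
  · have hmem : (R:ℂ) ∈ closedBall c R := by
      simp [hc, Metric.mem_closedBall, dist_zero_right, Complex.norm_real,
        Real.norm_eq_abs, _root_.abs_of_pos hR]
    have := hsub hmem
    rw [mem_ball_zero_iff] at this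
    rw [hc]
    simp only [norm_zero, add_zero]
    rw [Complex.norm_real, Real.norm_eq_abs, _root_.abs_of_pos hR] at this
    exact this
  · have hcn : (0:ℝ) < ‖c‖ := norm_pos_iff.2 hc
    set x : ℂ := c + ((R/‖c‖ : ℝ):ℂ) * c with hx
    have hmem : x ∈ closedBall c R := by
      rw [Metric.mem_closedBall, dist_eq_norm, hx]
      have : c + ((R/‖c‖ : ℝ):ℂ) * c - c = ((R/‖c‖ : ℝ):ℂ) * c := by ring
      rw [this, norm_mul, Complex.norm_real, Real.norm_eq_abs,
        _root_.abs_of_pos (by positivity)]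
      rw [div_mul_cancel₀ _ hcn.ne']
    have hlt := hsub hmem
    rw [mem_ball_zero_iff, hx] at hlt
    have hxnorm : ‖c + ((R/‖c‖ : ℝ):ℂ) * c‖ = ‖c‖ + R := by
      have e1 : c + ((R/‖c‖ : ℝ):ℂ) * c = ((1 + R/‖c‖ : ℝ):ℂ) * c := by
        push_cast
        ring
      rw [e1, norm_mul, Complex.norm_real, Real.norm_eq_abs,
        _root_.abs_of_pos (by positivity)]
      rw [add_mul, one_mul, div_mul_cancel₀ _ hcn.ne']
    rw [hxnorm] at hlt
    linarith

/-- the series `G` stays bounded as `z → 0`; consequently the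
singularity at the origin is removable and `G` extends harmonically
(away from its pole at `a`) to the whole disk. -/
theorem green_series_bounded_near_zero_and_extends
    (a : ℝ) (ha : a ∈ Ioo (0:ℝ) 1) :
    (∃ M : ℝ, ∃ δ > (0:ℝ), ∀ z : ℂ, z ≠ 0 → ‖z‖ < δ → |greenSeries a z| ≤ M) ∧
    (∃ h : ℂ → ℝ, HarmonicOn h (ball (0:ℂ) 1 \ {(a:ℂ)}) ∧
      ∀ z ∈ ball (0:ℂ) 1 \ {0, (a:ℂ)}, h z = greenSeries a z) := by
  have hπ := Real.pi_pos
  have hainv : (1:ℝ) < a⁻¹ := by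
    have h1 := mul_inv_cancel₀ ha.1.ne'
    have h2 := inv_pos.2 ha.1
    nlinarith [ha.2]
  set φ : ℂ → ℝ := fun z => Real.log ‖((a:ℂ)*z - 1)/(z - (a:ℂ))‖ with hφ
  have hEq : ∀ z : ℂ, z ≠ 0 → z ≠ (a:ℂ) → ‖z‖ < 1 → greenSeries a z = φ z :=
    fun z h0 hza h1 => greenSeries_eq ha h0 hza h1
  constructor
  · -- bounded near zero
    have h0a : (0:ℂ) ≠ (a:ℂ) := by
      intro h
      have : (a:ℂ) = 0 := h.symm
      rw [Complex.ofReal_eq_zero] at this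
      exact ha.1.ne' this
    have hca : ContinuousAt φ 0 := phi_continuousAt ha h0a (by simp)
    obtain ⟨δ', hδ'pos, hδ'⟩ := Metric.continuousAt_iff.1 hca 1 one_pos
    refine ⟨|φ 0| + 1, min δ' (min (a/2) (1/2)), by
      have := ha.1
      positivity, ?_⟩
    intro z hz0 hzδ
    have hz12 : ‖z‖ < 1/2 := lt_of_lt_of_le hzδ ((min_le_right _ _).trans (min_le_right _ _))
    have hz1 : ‖z‖ < 1 := by linarith
    have hza2 : ‖z‖ < a/2 := lt_of_lt_of_le hzδ ((min_le_right _ _).trans (min_le_left _ _))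
    have hza : z ≠ (a:ℂ) := by
      intro h
      rw [h, Complex.norm_real, Real.norm_eq_abs, _root_.abs_of_pos ha.1] at hza2
      linarith [ha.1]
    rw [hEq z hz0 hza hz1]
    have hd : dist z 0 < δ' := by
      rw [dist_zero_right]
      exact lt_of_lt_of_le hzδ (min_le_left _ _)
    have hd2 := hδ' hd
    rw [Real.dist_eq] at hd2
    calc |φ z| = |(φ z - φ 0) + φ 0| := by ring_nf
      _ ≤ |φ z - φ 0| + |φ 0| := abs_add_le _ _
      _ ≤ |φ 0| + 1 := by linarith
  · refine ⟨φ, ⟨?_, ?_⟩, ?_⟩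
    · -- continuity
      intro z hz
      have hz1 : ‖z‖ < 1 := mem_ball_zero_iff.1 hz.1
      have hza : z ≠ (a:ℂ) := by simpa using hz.2
      exact (phi_continuousAt ha hza hz1).continuousWithinAt
    · -- mean value property
      intro c hc R hR hsub
      have hsub1 : closedBall c R ⊆ ball (0:ℂ) 1 := hsub.trans diff_subset
      have hRc : R + ‖c‖ < 1 := ball_radius_bound hR hsub1
      have hc1 : ‖c‖ < 1 := by linarith
      have hcna : c ≠ (a:ℂ) := by simpa using hc.2
      have hp1norm : ‖((a⁻¹:ℝ):ℂ)‖ = a⁻¹ := by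
        rw [Complex.norm_real, Real.norm_eq_abs, _root_.abs_of_pos (inv_pos.2 ha.1)]
      have hp1 : R < ‖c - ((a⁻¹:ℝ):ℂ)‖ := by
        have h5 := norm_sub_norm_le (((a⁻¹:ℝ):ℂ)) c
        rw [← norm_sub_rev] at h5
        rw [hp1norm] at h5
        linarith
      have hp2 : R < ‖c - (a:ℂ)‖ := by
        by_contra h
        push_neg at h
        have hmem : (a:ℂ) ∈ closedBall c R := by
          rw [Metric.mem_closedBall, dist_eq_norm, norm_sub_rev]
          exact h
        exact (hsub hmem).2 rfl
      have hmemθ : ∀ θ : ℝ, c + (R:ℂ)*Complex.exp (θ*Complex.I) ∈ closedBall c R := by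
        intro θ
        rw [Metric.mem_closedBall, dist_eq_norm]
        have e : c + (R:ℂ)*Complex.exp (θ*Complex.I) - c = (R:ℂ)*Complex.exp (θ*Complex.I) := by
          ring
        rw [e, norm_mul, Complex.norm_exp_ofReal_mul_I, mul_one, Complex.norm_real,
          Real.norm_eq_abs, _root_.abs_of_pos hR]
      have hne1 : ∀ θ : ℝ, c + (R:ℂ)*Complex.exp (θ*Complex.I) - ((a⁻¹:ℝ):ℂ) ≠ 0 := by
        intro θ h
        have h6 : c + (R:ℂ)*Complex.exp (θ*Complex.I) = ((a⁻¹:ℝ):ℂ) := by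
          linear_combination h
        have h7 := hmemθ θ
        rw [h6, Metric.mem_closedBall, dist_eq_norm, norm_sub_rev] at h7
        linarith
      have hne2 : ∀ θ : ℝ, c + (R:ℂ)*Complex.exp (θ*Complex.I) - (a:ℂ) ≠ 0 := by
        intro θ h
        have h6 : c + (R:ℂ)*Complex.exp (θ*Complex.I) = (a:ℂ) := by
          linear_combination h
        have h7 := hmemθ θ
        rw [h6, Metric.mem_closedBall, dist_eq_norm, norm_sub_rev] at h7
        linarith
      have hint1 : Continuous (fun θ : ℝ =>
          Real.log ‖c + (R:ℂ)*Complex.exp (θ*Complex.I) - ((a⁻¹:ℝ):ℂ)‖) := by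
        apply Continuous.log
        · continuity
        · intro θ
          exact norm_ne_zero_iff.2 (hne1 θ)
      have hint2 : Continuous (fun θ : ℝ =>
          Real.log ‖c + (R:ℂ)*Complex.exp (θ*Complex.I) - (a:ℂ)‖) := by
        apply Continuous.log
        · continuity
        · intro θ
          exact norm_ne_zero_iff.2 (hne2 θ)
      have hdecθ : ∀ θ ∈ Set.uIcc (0:ℝ) (2*Real.pi),
          φ (c + (R:ℂ)*Complex.exp (θ*Complex.I))
          = Real.log a + Real.log ‖c + (R:ℂ)*Complex.exp (θ*Complex.I) - ((a⁻¹:ℝ):ℂ)‖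
            - Real.log ‖c + (R:ℂ)*Complex.exp (θ*Complex.I) - (a:ℂ)‖ := by
        intro θ _
        have h7 := hmemθ θ
        have h8 : ‖c + (R:ℂ)*Complex.exp (θ*Complex.I)‖ < 1 :=
          mem_ball_zero_iff.1 (hsub1 h7)
        have h9 : c + (R:ℂ)*Complex.exp (θ*Complex.I) ≠ (a:ℂ) := by
          simpa using (hsub h7).2
        exact phi_decomp ha h9 h8
      rw [intervalIntegral.integral_congr hdecθ]
      have hIa : IntervalIntegrable (fun _ : ℝ => Real.log a) MeasureTheory.volume 0 (2*Real.pi) :=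
        intervalIntegrable_const
      have hsplit : (∫ θ in (0:ℝ)..(2*Real.pi),
          (Real.log a + Real.log ‖c + (R:ℂ)*Complex.exp (θ*Complex.I) - ((a⁻¹:ℝ):ℂ)‖
            - Real.log ‖c + (R:ℂ)*Complex.exp (θ*Complex.I) - (a:ℂ)‖))
          = 2*Real.pi * Real.log a + 2*Real.pi * Real.log ‖c - ((a⁻¹:ℝ):ℂ)‖
            - 2*Real.pi * Real.log ‖c - (a:ℂ)‖ := by
        rw [intervalIntegral.integral_sub (hIa.add (hint1.intervalIntegrable _ _))
          (hint2.intervalIntegrable _ _),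
          intervalIntegral.integral_add hIa (hint1.intervalIntegrable _ _),
          intervalIntegral.integral_const, integral_log_norm_circle hR hp1,
          integral_log_norm_circle hR hp2, smul_eq_mul]
        ring
      rw [hsplit]
      simp only [hφ]
      rw [phi_decomp ha hcna hc1]
      field_simp
    · intro z hz
      have hz1 : ‖z‖ < 1 := mem_ball_zero_iff.1 hz.1
      have hz2 : z ≠ 0 ∧ z ≠ (a:ℂ) := by
        have := hz.2
        simp only [Set.mem_insert_iff, Set.mem_singleton_iff, not_or] at this
        exact this
      exact (hEq z hz2.1 hz2.2 hz1).symm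
end
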